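/- Let {w_1,...,w_m} be a basis of R^m with sin θ_k ≥ (√2/3)^m for all k (θ_k the angle between w_k and the span of the other basis vectors), w̃_0 = Σ s_i w_i with |s_i| < 1/2, M > 0, and H(x) = M^2 - |w̃_0 + Σ x_i w_i|^2. Assume 2m|w_i| < M for all i, and set A_i = M/(m|w_i|) - 1/2. If y ∈ R^m satisfies |y_k| ≥ 2m(3/√2)^m A_k for some k, then H(y) < 0. -/
import Mathlib
set_option maxHeartbeats 1000000


theorem stmt7 (m : ℕ) (hm : 1 ≤ m) (w : Fin m → EuclideanSpace ℝ (Fin m))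
    (hli : LinearIndependent ℝ w)
    (hangle : ∀ k : Fin m, ∀ u ∈ Submodule.span ℝ (w '' {j | j ≠ k}),
      (Real.sqrt 2 / 3) ^ m * ‖w k‖ ≤ ‖w k - u‖)
    (s : Fin m → ℝ) (hs : ∀ i, |s i| < 1 / 2)
    (M : ℝ) (hM : 0 < M) (hw : ∀ i, 2 * m * ‖w i‖ < M)
    (y : Fin m → ℝ) (k : Fin m)
    (hy : 2 * m * (3 / Real.sqrt 2) ^ m * (M / (m * ‖w k‖) - 1 / 2) ≤ |y k|) :
    M ^ 2 - ‖(∑ i, s i • w i) + ∑ i, y i • w i‖ ^ 2 < 0 := by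
  have hB : 0 < ‖w k‖ := norm_pos_iff.mpr (hli.ne_zero k)
  set B := ‖w k‖ with hBdef
  set c : ℝ := (Real.sqrt 2 / 3) ^ m with hcdef
  have hs2 : (0:ℝ) < Real.sqrt 2 := Real.sqrt_pos.mpr (by norm_num)
  have hc : 0 < c := by positivity
  have hc1 : c ≤ 1 := by
    apply pow_le_one₀ (by positivity)
    rw [div_le_one (by norm_num)]
    nlinarith [Real.sq_sqrt (by norm_num : (2:ℝ) ≥ 0), Real.sqrt_nonneg 2]
  have hcinv : (3 / Real.sqrt 2) ^ m = c⁻¹ := by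
    rw [hcdef, ← inv_pow, inv_div]
  have hm' : (1:ℝ) ≤ m := by exact_mod_cast hm
  have hmB : 0 < (m:ℝ) * B := by positivity
  have hwk := hw k
  have hMdiv : (2:ℝ) < M / (m * B) := by
    rw [lt_div_iff₀ hmB]; nlinarith
  rw [hcinv] at hy
  have hsum : (∑ i, s i • w i) + ∑ i, y i • w i = ∑ i, (s i + y i) • w i := by
    rw [← Finset.sum_add_distrib]
    simp [add_smul]
  rw [hsum]
  set v := ∑ i, (s i + y i) • w i with hvdef
  set t := s k + y k with htdef
  have hcinv1 : (1:ℝ) ≤ c⁻¹ := by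
    rw [le_inv_comm₀ (by norm_num) hc]; simpa using hc1
  have hyk3 : (3:ℝ) ≤ |y k| := by
    have h1 : (3:ℝ) ≤ 2 * m * c⁻¹ * (M / (m * B) - 1 / 2) := by
      nlinarith [mul_le_mul hm' hcinv1 (by norm_num : (0:ℝ) ≤ 1) (by positivity : (0:ℝ) ≤ (m:ℝ))]
    linarith
  have ht : t ≠ 0 := by
    intro h
    have := hs k
    have : |y k| < 1/2 := by
      have : y k = -s k := by linarith [congrArg id h, (by rw [htdef] at h; linarith : y k = - s k)]
      rw [this, abs_neg]; linarith [hs k]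
    linarith
  -- u = sum over i ≠ k
  have hsplit : v = t • w k + ∑ i ∈ Finset.univ.erase k, (s i + y i) • w i := by
    rw [hvdef, ← Finset.add_sum_erase _ _ (Finset.mem_univ k)]
  set u := ∑ i ∈ Finset.univ.erase k, (s i + y i) • w i with hudef
  have hu : u ∈ Submodule.span ℝ (w '' {j | j ≠ k}) := by
    apply Submodule.sum_mem
    intro i hi
    exact Submodule.smul_mem _ _ (Submodule.subset_span ⟨i, (Finset.mem_erase.mp hi).1, rfl⟩)
  have hu' : (-t⁻¹) • u ∈ Submodule.span ℝ (w '' {j | j ≠ k}) :=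
    Submodule.smul_mem _ _ hu
  have key := hangle k _ hu'
  have heq : w k - (-t⁻¹) • u = t⁻¹ • v := by
    rw [hsplit, smul_add, smul_smul, inv_mul_cancel₀ ht, one_smul, neg_smul, sub_neg_eq_add]
  rw [heq] at key
  have hnorm : ‖t⁻¹ • v‖ = |t|⁻¹ * ‖v‖ := by
    rw [norm_smul, norm_inv, Real.norm_eq_abs]
  rw [hnorm] at key
  have htpos : 0 < |t| := abs_pos.mpr ht
  have hvlb : |t| * (c * B) ≤ ‖v‖ := by
    rw [← le_div_iff₀' htpos, div_eq_inv_mul]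
    exact key
  have htlb : |y k| - 1/2 ≤ |t| := by
    have := abs_sub_abs_le_abs_sub (y k) (-(s k))
    simp only [sub_neg_eq_add, abs_neg] at this
    have h2 : |y k + s k| = |t| := by rw [htdef, add_comm]
    rw [h2] at this
    linarith [hs k]
  have hvlb2 : (|y k| - 1/2) * (c * B) ≤ ‖v‖ := by
    calc (|y k| - 1/2) * (c * B) ≤ |t| * (c * B) := by
          apply mul_le_mul_of_nonneg_right htlb (by positivity)
      _ ≤ ‖v‖ := hvlb
  clear_value v u
  clear hsplit hu hu' key heq hvlb hvdef hudef hsum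
  have harith : ∀ N : ℝ, (|y k| - 1/2) * (c * B) ≤ N → M ^ 2 - N ^ 2 < 0 := by
    intro N hN
    have hMeq : M / (m * B) * (m * B) = M := div_mul_cancel₀ M (ne_of_gt hmB)
    have hci : c * c⁻¹ = 1 := mul_inv_cancel₀ (ne_of_gt hc)
    have h1 : 2*M - (m:ℝ)*B - c*B/2 ≤ (|y k| - 1/2) * (c*B) := by
      have h2 := mul_le_mul_of_nonneg_right hy (by positivity : (0:ℝ) ≤ c * B)
      nlinarith
    have h3 : c * B ≤ (m:ℝ) * B := by nlinarith
    have hMN : M < N := by linarith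
    nlinarith
  exact harith _ hvlb2
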